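/- The polynomial (1-x²)(1-y²) does not lie in the quadratic module Q(1-x², 1-y²); i.e., there are no sums of squares σ₀, σ₁, σ₂ ∈ ℝ[x,y] with (1-x²)(1-y²) = σ₀ + (1-x²)σ₁ + (1-y²)σ₂. -/

import Mathlib

open MvPolynomial

noncomputable section Aux8

abbrev R2 := MvPolynomial (Fin 2) ℝ

noncomputable def ψx : R2 →ₐ[ℝ] Polynomial ℝ := aeval ![Polynomial.C 1, Polynomial.X]
noncomputable def ψy : R2 →ₐ[ℝ] Polynomial ℝ := aeval ![Polynomial.X, Polynomial.C 1]
noncomputable def φx : R2 →ₐ[ℝ] R2 := aeval ![C 1, X 1]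
noncomputable def φy : R2 →ₐ[ℝ] R2 := aeval ![X 0, C 1]

lemma psix_comp (t : ℝ) : (Polynomial.aeval t).comp ψx = (aeval ![1, t] : R2 →ₐ[ℝ] ℝ) := by
  apply MvPolynomial.algHom_ext; intro i; fin_cases i <;> simp [ψx]

lemma psiy_comp (t : ℝ) : (Polynomial.aeval t).comp ψy = (aeval ![t, 1] : R2 →ₐ[ℝ] ℝ) := by
  apply MvPolynomial.algHom_ext; intro i; fin_cases i <;> simp [ψy]

lemma psix_eval (p : R2) (t : ℝ) : (ψx p).eval t = eval ![1, t] p := by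
  simpa using DFunLike.congr_fun (psix_comp t) p

lemma psiy_eval (p : R2) (t : ℝ) : (ψy p).eval t = eval ![t, 1] p := by
  simpa using DFunLike.congr_fun (psiy_comp t) p

lemma phix_comp : (Polynomial.aeval (X 1 : R2)).comp ψx = φx := by
  apply MvPolynomial.algHom_ext; intro i; fin_cases i <;> simp [ψx, φx]

lemma phiy_comp : (Polynomial.aeval (X 0 : R2)).comp ψy = φy := by
  apply MvPolynomial.algHom_ext; intro i; fin_cases i <;> simp [ψy, φy]

lemma dvd_sub_phix (p : R2) : (X 0 - 1 : R2) ∣ (p - φx p) := by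
  induction p using MvPolynomial.induction_on with
  | C a => simp [φx]
  | add p q hp hq =>
    have h : p + q - φx (p + q) = (p - φx p) + (q - φx q) := by rw [map_add]; ring
    rw [h]; exact dvd_add hp hq
  | mul_X p i hp =>
    have h : p * X i - φx (p * X i) = (p - φx p) * X i + φx p * (X i - φx (X i)) := by
      rw [map_mul]; ring
    rw [h]
    refine dvd_add (hp.mul_right _) (Dvd.dvd.mul_left ?_ _)
    fin_cases i <;> simp [φx]

lemma dvd_sub_phiy (p : R2) : (X 1 - 1 : R2) ∣ (p - φy p) := by
  induction p using MvPolynomial.induction_on with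
  | C a => simp [φy]
  | add p q hp hq =>
    have h : p + q - φy (p + q) = (p - φy p) + (q - φy q) := by rw [map_add]; ring
    rw [h]; exact dvd_add hp hq
  | mul_X p i hp =>
    have h : p * X i - φy (p * X i) = (p - φy p) * X i + φy p * (X i - φy (X i)) := by
      rw [map_mul]; ring
    rw [h]
    refine dvd_add (hp.mul_right _) (Dvd.dvd.mul_left ?_ _)
    fin_cases i <;> simp [φy]

lemma psix_zero_of_forall {p : R2} (h : ∀ t : ℝ, eval ![1, t] p = 0) : ψx p = 0 := by
  apply Polynomial.funext
  intro t
  rw [psix_eval, h t, Polynomial.eval_zero]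

lemma psiy_zero_of_forall {p : R2} (h : ∀ t : ℝ, eval ![t, 1] p = 0) : ψy p = 0 := by
  apply Polynomial.funext
  intro t
  rw [psiy_eval, h t, Polynomial.eval_zero]

lemma dvd_x_of_line {p : R2} (h : ψx p = 0) : (X 0 - 1 : R2) ∣ p := by
  have h2 : φx p = 0 := by
    rw [← phix_comp]
    simp [h]
  have := dvd_sub_phix p
  rwa [h2, sub_zero] at this

lemma dvd_y_of_line {p : R2} (h : ψy p = 0) : (X 1 - 1 : R2) ∣ p := by
  have h2 : φy p = 0 := by
    rw [← phiy_comp]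
    simp [h]
  have := dvd_sub_phiy p
  rwa [h2, sub_zero] at this

lemma sos_eval_nonneg {s : R2} (hs : IsSumSq s) (v : Fin 2 → ℝ) : 0 ≤ eval v s := by
  induction hs with
  | zero => simp
  | @sq_add a S pS ih =>
    rw [map_add, map_mul]
    nlinarith [mul_self_nonneg (eval v a)]

lemma sos_dvd_x {s : R2} (hs : IsSumSq s) (h : ∀ t : ℝ, eval ![1, t] s = 0) :
    ((X 0 - 1 : R2)) ^ 2 ∣ s := by
  induction hs with
  | zero => exact dvd_zero _
  | @sq_add a S pS ih =>
    have ha : ∀ t : ℝ, eval ![1, t] a = 0 := by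
      intro t
      have h0 := h t
      rw [map_add, map_mul] at h0
      have h1 := sos_eval_nonneg pS ![1, t]
      nlinarith
    have hS : ∀ t : ℝ, eval ![1, t] S = 0 := by
      intro t
      have h0 := h t
      rw [map_add, map_mul, ha t] at h0
      linarith
    obtain ⟨b, hb⟩ := dvd_x_of_line (psix_zero_of_forall ha)
    exact dvd_add ⟨b * b, by rw [hb]; ring⟩ (ih hS)

lemma sos_dvd_y {s : R2} (hs : IsSumSq s) (h : ∀ t : ℝ, eval ![t, 1] s = 0) :
    ((X 1 - 1 : R2)) ^ 2 ∣ s := by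
  induction hs with
  | zero => exact dvd_zero _
  | @sq_add a S pS ih =>
    have ha : ∀ t : ℝ, eval ![t, 1] a = 0 := by
      intro t
      have h0 := h t
      rw [map_add, map_mul] at h0
      have h1 := sos_eval_nonneg pS ![t, 1]
      nlinarith
    have hS : ∀ t : ℝ, eval ![t, 1] S = 0 := by
      intro t
      have h0 := h t
      rw [map_add, map_mul, ha t] at h0
      linarith
    obtain ⟨b, hb⟩ := dvd_y_of_line (psiy_zero_of_forall ha)
    exact dvd_add ⟨b * b, by rw [hb]; ring⟩ (ih hS)

lemma psiy_X_sub_one : ψy ((X 0 - 1 : R2)) = Polynomial.X - 1 := by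
  simp [ψy]

lemma sos_dvd_xy {s : R2} (hs : IsSumSq s) (hx : ∀ t : ℝ, eval ![1, t] s = 0)
    (hy : ∀ t : ℝ, eval ![t, 1] s = 0) :
    ((X 0 - 1 : R2) * (X 1 - 1)) ^ 2 ∣ s := by
  induction hs with
  | zero => exact dvd_zero _
  | @sq_add a S pS ih =>
    have hax : ∀ t : ℝ, eval ![1, t] a = 0 := by
      intro t
      have h0 := hx t
      rw [map_add, map_mul] at h0
      have h1 := sos_eval_nonneg pS ![1, t]
      nlinarith
    have hay : ∀ t : ℝ, eval ![t, 1] a = 0 := by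
      intro t
      have h0 := hy t
      rw [map_add, map_mul] at h0
      have h1 := sos_eval_nonneg pS ![t, 1]
      nlinarith
    have hSx : ∀ t : ℝ, eval ![1, t] S = 0 := by
      intro t
      have h0 := hx t
      rw [map_add, map_mul, hax t] at h0
      linarith
    have hSy : ∀ t : ℝ, eval ![t, 1] S = 0 := by
      intro t
      have h0 := hy t
      rw [map_add, map_mul, hay t] at h0
      linarith
    obtain ⟨b, hb⟩ := dvd_x_of_line (psix_zero_of_forall hax)
    have hby : ψy b = 0 := by
      have h0 : ψy a = 0 := psiy_zero_of_forall hay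
      rw [hb, map_mul, psiy_X_sub_one] at h0
      have hX : (Polynomial.X - 1 : Polynomial ℝ) ≠ 0 := by
        intro hc
        have := congrArg (Polynomial.eval 0) hc
        simp at this
      exact (mul_eq_zero.mp h0).resolve_left hX
    obtain ⟨c, hc⟩ := dvd_y_of_line hby
    refine dvd_add ⟨c * c, ?_⟩ (ih hSx hSy)
    rw [hb, hc]; ring

end Aux8

theorem stmt_8 :
    ¬ ∃ σ₀ σ₁ σ₂ : MvPolynomial (Fin 2) ℝ,
        IsSumSq σ₀ ∧ IsSumSq σ₁ ∧ IsSumSq σ₂ ∧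
        (1 - X 0 ^ 2) * (1 - X 1 ^ 2) =
          σ₀ + (1 - X 0 ^ 2) * σ₁ + (1 - X 1 ^ 2) * σ₂ := by
  rintro ⟨σ₀, σ₁, σ₂, h₀, h₁, h₂, E⟩
  have hx : ∀ t : ℝ, t ∈ Set.Ioo (-1 : ℝ) 1 →
      eval ![1, t] σ₀ = 0 ∧ eval ![1, t] σ₂ = 0 := by
    intro t ht
    have hE := congrArg (eval ![1, t]) E
    simp only [map_add, map_mul, map_sub, map_pow, map_one, eval_X,
      Matrix.cons_val_zero, Matrix.cons_val_one, Matrix.head_cons] at hE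
    have ht2 : (0 : ℝ) < 1 - t ^ 2 := by nlinarith [ht.1, ht.2]
    have n0 := sos_eval_nonneg h₀ ![1, t]
    have n2 := sos_eval_nonneg h₂ ![1, t]
    constructor <;> nlinarith [hE]
  have hσ₂x : ψx σ₂ = 0 := by
    apply Polynomial.eq_zero_of_infinite_isRoot
    apply (Set.Ioo_infinite (a := (-1:ℝ)) (b := 1) (by norm_num)).mono
    intro t ht
    simp only [Set.mem_setOf_eq, Polynomial.IsRoot, psix_eval]
    exact (hx t ht).2
  have hσ₀x : ψx σ₀ = 0 := by
    apply Polynomial.eq_zero_of_infinite_isRoot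
    apply (Set.Ioo_infinite (a := (-1:ℝ)) (b := 1) (by norm_num)).mono
    intro t ht
    simp only [Set.mem_setOf_eq, Polynomial.IsRoot, psix_eval]
    exact (hx t ht).1
  have hy : ∀ t : ℝ, t ∈ Set.Ioo (-1 : ℝ) 1 →
      eval ![t, 1] σ₀ = 0 ∧ eval ![t, 1] σ₁ = 0 := by
    intro t ht
    have hE := congrArg (eval ![t, 1]) E
    simp only [map_add, map_mul, map_sub, map_pow, map_one, eval_X,
      Matrix.cons_val_zero, Matrix.cons_val_one, Matrix.head_cons] at hE
    have ht2 : (0 : ℝ) < 1 - t ^ 2 := by nlinarith [ht.1, ht.2]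
    have n0 := sos_eval_nonneg h₀ ![t, 1]
    have n1 := sos_eval_nonneg h₁ ![t, 1]
    constructor <;> nlinarith [hE]
  have hσ₁y : ψy σ₁ = 0 := by
    apply Polynomial.eq_zero_of_infinite_isRoot
    apply (Set.Ioo_infinite (a := (-1:ℝ)) (b := 1) (by norm_num)).mono
    intro t ht
    simp only [Set.mem_setOf_eq, Polynomial.IsRoot, psiy_eval]
    exact (hy t ht).2
  have hσ₀y : ψy σ₀ = 0 := by
    apply Polynomial.eq_zero_of_infinite_isRoot
    apply (Set.Ioo_infinite (a := (-1:ℝ)) (b := 1) (by norm_num)).mono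
    intro t ht
    simp only [Set.mem_setOf_eq, Polynomial.IsRoot, psiy_eval]
    exact (hy t ht).1
  have hσ₂x' : ∀ t : ℝ, eval ![1, t] σ₂ = 0 := by
    intro t; rw [← psix_eval, hσ₂x, Polynomial.eval_zero]
  have hσ₀x' : ∀ t : ℝ, eval ![1, t] σ₀ = 0 := by
    intro t; rw [← psix_eval, hσ₀x, Polynomial.eval_zero]
  have hσ₁y' : ∀ t : ℝ, eval ![t, 1] σ₁ = 0 := by
    intro t; rw [← psiy_eval, hσ₁y, Polynomial.eval_zero]
  have hσ₀y' : ∀ t : ℝ, eval ![t, 1] σ₀ = 0 := by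
    intro t; rw [← psiy_eval, hσ₀y, Polynomial.eval_zero]
  obtain ⟨τ₂, hτ₂⟩ := sos_dvd_x h₂ hσ₂x'
  obtain ⟨τ₁, hτ₁⟩ := sos_dvd_y h₁ hσ₁y'
  obtain ⟨τ₀, hτ₀⟩ := sos_dvd_xy h₀ hσ₀x' hσ₀y'
  have key : (X 0 - 1 : MvPolynomial (Fin 2) ℝ) * (X 1 - 1) *
      ((1 + X 0) * (1 + X 1) -
        ((X 0 - 1) * (X 1 - 1) * τ₀ - (X 0 + 1) * (X 1 - 1) * τ₁ -
          (X 0 - 1) * (X 1 + 1) * τ₂)) = 0 := by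
    rw [hτ₀, hτ₁, hτ₂] at E
    linear_combination E
  have hne : (X 0 - 1 : MvPolynomial (Fin 2) ℝ) * (X 1 - 1) ≠ 0 := by
    intro hc
    have := congrArg (eval ![0, 0]) hc
    simp at this
  have h3 := (mul_eq_zero.mp key).resolve_left hne
  have h4 := congrArg (eval ![(1 : ℝ), 1]) h3
  simp at h4
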